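/- Approximate leverage score estimator accuracy: let K be symmetric PSD, γ > 0, 0 ≤ ε < 1, η = (2-ε)/(1-ε), and let K̃ be symmetric PSD with 0 ⪯ K - K̃ ⪯ (γ/(1-ε)) I. Define τ̃_i = (1/(ηγ))(K_{ii} - k_i^T (K̃ + ηγI)^{-1} k_i) where k_i = K e_i. Then (1/η) τ_i(γ) ≤ τ̃_i ≤ τ_i(γ), where τ_i(γ) = e_i^T K (K+γI)^{-1} e_i. -/

import Mathlib

open Matrix

section Aux

variable {n : ℕ}

private lemma herm_dot {A : Matrix (Fin n) (Fin n) ℝ} (hA : A.IsHermitian)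
    (a b : Fin n → ℝ) : a ⬝ᵥ (A *ᵥ b) = (A *ᵥ a) ⬝ᵥ b := by
  rw [Matrix.dotProduct_mulVec, ← Matrix.mulVec_transpose,
    ← Matrix.conjTranspose_eq_transpose_of_trivial, hA.eq]

private lemma psd_quad {A : Matrix (Fin n) (Fin n) ℝ} (hA : A.PosSemidef)
    (x : Fin n → ℝ) : 0 ≤ x ⬝ᵥ (A *ᵥ x) := by
  simpa using hA.dotProduct_mulVec_nonneg x

/-- Monotonicity of the inverse in the Loewner order, quadratic-form version. -/
private lemma quad_inv_mono (A B : Matrix (Fin n) (Fin n) ℝ) (hA : A.PosDef)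
    (hB : B.PosDef) (h : (B - A).PosSemidef) (x : Fin n → ℝ) :
    x ⬝ᵥ (B⁻¹ *ᵥ x) ≤ x ⬝ᵥ (A⁻¹ *ᵥ x) := by
  set u := A⁻¹ *ᵥ x with hu
  set v := B⁻¹ *ᵥ x with hv
  have hAu : A *ᵥ u = x := by
    rw [hu, mulVec_mulVec, Matrix.mul_nonsing_inv _ ((Matrix.isUnit_iff_isUnit_det A).1 hA.isUnit),
      one_mulVec]
  have hBv : B *ᵥ v = x := by
    rw [hv, mulVec_mulVec, Matrix.mul_nonsing_inv _ ((Matrix.isUnit_iff_isUnit_det B).1 hB.isUnit),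
      one_mulVec]
  have h1 : (0:ℝ) ≤ (u - v) ⬝ᵥ (A *ᵥ (u - v)) := psd_quad hA.posSemidef _
  have h2 : (0:ℝ) ≤ v ⬝ᵥ ((B - A) *ᵥ v) := psd_quad h v
  have e1 : u ⬝ᵥ (A *ᵥ u) = x ⬝ᵥ u := by rw [hAu, dotProduct_comm]
  have e2 : u ⬝ᵥ (A *ᵥ v) = x ⬝ᵥ v := by rw [herm_dot hA.isHermitian, hAu]
  have e3 : v ⬝ᵥ (A *ᵥ u) = x ⬝ᵥ v := by rw [hAu, dotProduct_comm]
  have e4 : v ⬝ᵥ (B *ᵥ v) = x ⬝ᵥ v := by rw [hBv, dotProduct_comm]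
  have key : (u - v) ⬝ᵥ (A *ᵥ (u - v)) + v ⬝ᵥ ((B - A) *ᵥ v) = x ⬝ᵥ u - x ⬝ᵥ v := by
    rw [mulVec_sub, sub_mulVec]
    simp only [sub_dotProduct, dotProduct_sub, e1, e2, e3, e4]
    ring
  linarith [add_nonneg h1 h2, key.ge, key.le]

private lemma diag_as_quad (M : Matrix (Fin n) (Fin n) ℝ) (i : Fin n) :
    M i i = Pi.single i 1 ⬝ᵥ (M *ᵥ Pi.single i 1) := by
  simp [Matrix.mulVec_single, single_dotProduct]

private lemma smul_one_posDef {c : ℝ} (hc : 0 < c) :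
    (c • (1 : Matrix (Fin n) (Fin n) ℝ)).PosDef := by
  rw [Matrix.smul_one_eq_diagonal]
  exact Matrix.PosDef.diagonal fun _ => hc

private lemma psd_smul {M : Matrix (Fin n) (Fin n) ℝ} (hM : M.PosSemidef) {c : ℝ}
    (hc : 0 ≤ c) : (c • M).PosSemidef := by
  refine .of_dotProduct_mulVec_nonneg ?_ (fun x => ?_)
  · unfold Matrix.IsHermitian
    rw [conjTranspose_smul, hM.1.eq]
    simp
  · rw [smul_mulVec, dotProduct_smul, smul_eq_mul]
    exact mul_nonneg hc (hM.dotProduct_mulVec_nonneg x)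

/-- Identity: λ * (K (K+λI)⁻¹)_{ii} = K_{ii} - kᵢᵀ (K+λI)⁻¹ kᵢ. -/
private lemma tau_identity (K : Matrix (Fin n) (Fin n) ℝ) (hK : K.PosSemidef)
    {l : ℝ} (hl : 0 < l) (i : Fin n) :
    l * (K * (K + l • 1)⁻¹) i i
      = K i i - (K *ᵥ Pi.single i 1) ⬝ᵥ ((K + l • 1)⁻¹ *ᵥ (K *ᵥ Pi.single i 1)) := by
  set N : Matrix (Fin n) (Fin n) ℝ := K + l • 1 with hN
  have hNpd : N.PosDef := Matrix.PosDef.posSemidef_add hK (smul_one_posDef hl)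
  have hNdet : IsUnit N.det := (Matrix.isUnit_iff_isUnit_det N).1 hNpd.isUnit
  have hmul : K * N⁻¹ * K = K - l • (K * N⁻¹) := by
    have h0 : K * N⁻¹ * N = K := by
      rw [Matrix.mul_assoc, Matrix.nonsing_inv_mul _ hNdet, mul_one]
    have : K * N⁻¹ * N = K * N⁻¹ * K + l • (K * N⁻¹) := by
      rw [hN, mul_add, Matrix.mul_smul, mul_one]
    rw [this] at h0
    exact eq_sub_of_add_eq h0
  have hquad : (K *ᵥ Pi.single i 1) ⬝ᵥ ((K + l • 1)⁻¹ *ᵥ (K *ᵥ Pi.single i 1))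
      = (K * N⁻¹ * K) i i := by
    rw [← hN, mulVec_mulVec, ← herm_dot hK.isHermitian, mulVec_mulVec, ← Matrix.mul_assoc,
      ← diag_as_quad]
  rw [hquad, hmul]
  simp [Matrix.sub_apply, Matrix.smul_apply]

/-- (K (K+λI)⁻¹)_{ii} = 1 - ((λ⁻¹ K + I)⁻¹)_{ii}. -/
private lemma tau_alt (K : Matrix (Fin n) (Fin n) ℝ) (hK : K.PosSemidef)
    {l : ℝ} (hl : 0 < l) (i : Fin n) :
    (K * (K + l • 1)⁻¹) i i = 1 - ((l⁻¹ • K + 1)⁻¹) i i := by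
  set N : Matrix (Fin n) (Fin n) ℝ := K + l • 1 with hN
  have hNpd : N.PosDef := Matrix.PosDef.posSemidef_add hK (smul_one_posDef hl)
  have hNdet : IsUnit N.det := (Matrix.isUnit_iff_isUnit_det N).1 hNpd.isUnit
  have h1 : K * N⁻¹ = 1 - l • N⁻¹ := by
    have : K = N - l • (1 : Matrix (Fin n) (Fin n) ℝ) := by rw [hN]; abel
    rw [this, Matrix.sub_mul, Matrix.mul_nonsing_inv _ hNdet, Matrix.smul_mul, one_mul]
  have h2 : (l⁻¹ • K + 1 : Matrix (Fin n) (Fin n) ℝ) = l⁻¹ • N := by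
    rw [hN, smul_add, smul_smul, inv_mul_cancel₀ hl.ne', one_smul]
  have h3 : (l⁻¹ • N)⁻¹ = l • N⁻¹ := by
    apply Matrix.inv_eq_right_inv
    rw [Matrix.smul_mul, Matrix.mul_smul, smul_smul, Matrix.mul_nonsing_inv _ hNdet,
      inv_mul_cancel₀ hl.ne', one_smul]
  rw [h1, h2, h3]
  simp [Matrix.sub_apply]

/-- Monotonicity in λ of the regularized leverage score. -/
private lemma tau_mono (K : Matrix (Fin n) (Fin n) ℝ) (hK : K.PosSemidef)
    {a b : ℝ} (ha : 0 < a) (hab : a ≤ b) (i : Fin n) :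
    (K * (K + b • 1)⁻¹) i i ≤ (K * (K + a • 1)⁻¹) i i := by
  have hb : 0 < b := lt_of_lt_of_le ha hab
  rw [tau_alt K hK ha i, tau_alt K hK hb i]
  have hBpd : (a⁻¹ • K + 1 : Matrix (Fin n) (Fin n) ℝ).PosDef :=
    Matrix.PosDef.posSemidef_add (psd_smul hK (by positivity)) Matrix.PosDef.one
  have hApd : (b⁻¹ • K + 1 : Matrix (Fin n) (Fin n) ℝ).PosDef :=
    Matrix.PosDef.posSemidef_add (psd_smul hK (by positivity)) Matrix.PosDef.one
  have hdiff : ((a⁻¹ • K + 1) - (b⁻¹ • K + 1) : Matrix (Fin n) (Fin n) ℝ)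
      = (a⁻¹ - b⁻¹) • K := by
    rw [sub_smul]; abel
  have hba : b⁻¹ ≤ a⁻¹ := by
    apply inv_anti₀ ha hab
  have hpsd : (((a⁻¹ • K + 1) - (b⁻¹ • K + 1)) : Matrix (Fin n) (Fin n) ℝ).PosSemidef := by
    rw [hdiff]; exact psd_smul hK (by linarith)
  have := quad_inv_mono (b⁻¹ • K + 1) (a⁻¹ • K + 1) hApd hBpd hpsd (Pi.single i 1)
  rw [← diag_as_quad, ← diag_as_quad] at this
  linarith

end Aux

/-- Accuracy of the approximate leverage score estimator:
(1/η) τ_i(γ) ≤ τ̃_i ≤ τ_i(γ). -/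
theorem approx_rls_accuracy {n : ℕ} (K Kt : Matrix (Fin n) (Fin n) ℝ)
    (hK : K.PosSemidef) (hKt : Kt.PosSemidef)
    (γ ε : ℝ) (hγ : 0 < γ) (hε0 : 0 ≤ ε) (hε1 : ε < 1)
    (h1 : (K - Kt).PosSemidef)
    (h2 : ((γ / (1 - ε)) • (1 : Matrix (Fin n) (Fin n) ℝ) - (K - Kt)).PosSemidef)
    (i : Fin n) :
    let η : ℝ := (2 - ε) / (1 - ε)
    let ki : Fin n → ℝ := K *ᵥ Pi.single i 1
    let τ : ℝ := (K * (K + γ • 1)⁻¹) i i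
    let τtilde : ℝ := (1 / (η * γ)) * (K i i - ki ⬝ᵥ ((Kt + (η * γ) • 1)⁻¹ *ᵥ ki))
    (1 / η) * τ ≤ τtilde ∧ τtilde ≤ τ := by
  intro η ki τ τt
  have hε : 0 < 1 - ε := by linarith
  have hη : 0 < η := div_pos (by linarith) hε
  have hη2 : 2 ≤ η := by
    rw [le_div_iff₀ hε]; linarith
  have hηγ : 0 < η * γ := mul_pos hη hγ
  -- positive definite matrices
  have hPγ : (K + γ • 1 : Matrix (Fin n) (Fin n) ℝ).PosDef :=
    Matrix.PosDef.posSemidef_add hK (smul_one_posDef hγ)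
  have hPη : (K + (η * γ) • 1 : Matrix (Fin n) (Fin n) ℝ).PosDef :=
    Matrix.PosDef.posSemidef_add hK (smul_one_posDef hηγ)
  have hPtη : (Kt + (η * γ) • 1 : Matrix (Fin n) (Fin n) ℝ).PosDef :=
    Matrix.PosDef.posSemidef_add hKt (smul_one_posDef hηγ)
  -- step 1 : lower bound
  have hsc : η * γ = γ / (1 - ε) + γ := by
    show (2 - ε) / (1 - ε) * γ = γ / (1 - ε) + γ
    rw [div_mul_eq_mul_div, div_add' _ _ _ hε.ne', div_eq_div_iff hε.ne' hε.ne']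
    ring
  have hd1 : ((Kt + (η * γ) • 1) - (K + γ • 1) : Matrix (Fin n) (Fin n) ℝ)
      = (γ / (1 - ε)) • (1 : Matrix (Fin n) (Fin n) ℝ) - (K - Kt) := by
    rw [hsc, add_smul]; abel
  have hq1 : ki ⬝ᵥ ((Kt + (η * γ) • 1)⁻¹ *ᵥ ki) ≤ ki ⬝ᵥ ((K + γ • 1)⁻¹ *ᵥ ki) := by
    apply quad_inv_mono _ _ hPγ hPtη _ ki
    rw [hd1]; exact h2
  have hid_γ : γ * τ = K i i - ki ⬝ᵥ ((K + γ • 1)⁻¹ *ᵥ ki) := tau_identity K hK hγ i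
  have hlow : (1 / η) * τ ≤ τt := by
    have : (1 / (η * γ)) * (K i i - ki ⬝ᵥ ((K + γ • 1)⁻¹ *ᵥ ki)) ≤ τt := by
      apply mul_le_mul_of_nonneg_left _ (by positivity)
      linarith
    rw [← hid_γ] at this
    calc (1 / η) * τ = (1 / (η * γ)) * (γ * τ) := by field_simp
    _ ≤ τt := this
  -- step 2 : upper bound
  have hd2 : ((K + (η * γ) • 1) - (Kt + (η * γ) • 1) : Matrix (Fin n) (Fin n) ℝ)
      = K - Kt := by abel
  have hq2 : ki ⬝ᵥ ((K + (η * γ) • 1)⁻¹ *ᵥ ki) ≤ ki ⬝ᵥ ((Kt + (η * γ) • 1)⁻¹ *ᵥ ki) := by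
    apply quad_inv_mono _ _ hPtη hPη _ ki
    rw [hd2]; exact h1
  have hid_η : (η * γ) * (K * (K + (η * γ) • 1)⁻¹) i i
      = K i i - ki ⬝ᵥ ((K + (η * γ) • 1)⁻¹ *ᵥ ki) := tau_identity K hK hηγ i
  have hmono : (K * (K + (η * γ) • 1)⁻¹) i i ≤ τ :=
    tau_mono K hK hγ (by nlinarith) i
  have hup : τt ≤ τ := by
    have step : τt ≤ (1 / (η * γ)) * (K i i - ki ⬝ᵥ ((K + (η * γ) • 1)⁻¹ *ᵥ ki)) := by
      apply mul_le_mul_of_nonneg_left _ (by positivity)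
      linarith
    rw [← hid_η] at step
    have : (1 / (η * γ)) * ((η * γ) * (K * (K + (η * γ) • 1)⁻¹) i i)
        = (K * (K + (η * γ) • 1)⁻¹) i i := by field_simp
    rw [this] at step
    linarith
  exact ⟨hlow, hup⟩
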